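/- Define the cross-ratio R(Ω₀, Ω₁) = (Ω₀−Ω₁)(Ω₀−Ω̄₁)^{-1}(Ω̄₀−Ω̄₁)(Ω̄₀−Ω₁)^{-1} for Ω₀, Ω₁ ∈ ℍ_n. Then for any M ∈ Sp(n,ℝ), the matrices R(M·Ω₁, M·Ω₀) and R(Ω₁, Ω₀) have the same eigenvalues (they are similar matrices). -/

import Mathlib

open Matrix

/-- `J_n = (0 I_n; -I_n 0)`. -/
def Jmat (n : ℕ) : Matrix (Fin n ⊕ Fin n) (Fin n ⊕ Fin n) ℝ :=
  Matrix.fromBlocks 0 1 (-1) 0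

/-- `M ∈ Sp(n,ℝ)` iff `Mᵀ J_n M = J_n`. -/
def IsSymplectic {n : ℕ} (M : Matrix (Fin n ⊕ Fin n) (Fin n ⊕ Fin n) ℝ) : Prop :=
  Mᵀ * Jmat n * M = Jmat n

/-- `Ω` lies in the Siegel upper half plane `ℍ_n`: it is symmetric and `Im Ω > 0`. -/
def InSiegelUHS {n : ℕ} (Ω : Matrix (Fin n) (Fin n) ℂ) : Prop :=
  Ω.IsSymm ∧ (Ω.map Complex.im).PosDef

/-- The action `M·Ω = (AΩ+B)(CΩ+D)⁻¹`, where `M = (A B; C D)` in block form. -/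
noncomputable def spSMul {n : ℕ} (M : Matrix (Fin n ⊕ Fin n) (Fin n ⊕ Fin n) ℝ)
    (Ω : Matrix (Fin n) (Fin n) ℂ) : Matrix (Fin n) (Fin n) ℂ :=
  (M.toBlocks₁₁.map Complex.ofReal * Ω + M.toBlocks₁₂.map Complex.ofReal) *
    (M.toBlocks₂₁.map Complex.ofReal * Ω + M.toBlocks₂₂.map Complex.ofReal)⁻¹

/-- The cross-ratio `R(Ω₀,Ω₁) = (Ω₀−Ω₁)(Ω₀−Ω̄₁)⁻¹(Ω̄₀−Ω̄₁)(Ω̄₀−Ω₁)⁻¹`. -/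
noncomputable def crossRatio {n : ℕ} (Ω₀ Ω₁ : Matrix (Fin n) (Fin n) ℂ) :
    Matrix (Fin n) (Fin n) ℂ :=
  (Ω₀ - Ω₁) * (Ω₀ - Ω₁.map (starRingEnd ℂ))⁻¹ *
    (Ω₀.map (starRingEnd ℂ) - Ω₁.map (starRingEnd ℂ)) *
    (Ω₀.map (starRingEnd ℂ) - Ω₁)⁻¹

namespace CRAux

open scoped ComplexOrder

variable {n : ℕ}

noncomputable abbrev cj (X : Matrix (Fin n) (Fin n) ℂ) : Matrix (Fin n) (Fin n) ℂ :=
  X.map (starRingEnd ℂ)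

lemma cj_mul (X Y : Matrix (Fin n) (Fin n) ℂ) : cj (X * Y) = cj X * cj Y :=
  Matrix.map_mul

lemma cj_inv (X : Matrix (Fin n) (Fin n) ℂ) : cj X⁻¹ = (cj X)⁻¹ := by
  have h1 := (starRingEnd ℂ).map_adjugate X
  have h2 := (starRingEnd ℂ).map_det X
  simp only [RingHom.mapMatrix_apply] at h1 h2
  rw [Matrix.inv_def, Matrix.inv_def, ← h1, ← h2]
  ext i j
  simp [Ring.inverse_eq_inv', map_inv₀]

lemma cj_sub (X Y : Matrix (Fin n) (Fin n) ℂ) : cj (X - Y) = cj X - cj Y := by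
  ext i j; simp

lemma cj_add (X Y : Matrix (Fin n) (Fin n) ℂ) : cj (X + Y) = cj X + cj Y := by
  ext i j; simp

lemma cj_cmap (X : Matrix (Fin n) (Fin n) ℝ) :
    cj (X.map Complex.ofReal) = X.map Complex.ofReal := by
  ext i j; simp

lemma cj_cj (X : Matrix (Fin n) (Fin n) ℂ) : cj (cj X) = X := by
  ext i j; simp

lemma cj_isUnit {X : Matrix (Fin n) (Fin n) ℂ} (h : IsUnit X) : IsUnit (cj X) := by
  rw [Matrix.isUnit_iff_isUnit_det, isUnit_iff_ne_zero] at h ⊢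
  have hdet : (cj X).det = (starRingEnd ℂ) X.det := by
    rw [show cj X = (starRingEnd ℂ).mapMatrix X from rfl, ← RingHom.map_det]
  rw [hdet]
  simpa using h

lemma cj_isSymm {X : Matrix (Fin n) (Fin n) ℂ} (h : X.IsSymm) : (cj X).IsSymm := by
  show (X.map _)ᵀ = X.map _
  rw [← Matrix.transpose_map, h.eq]

lemma cmap_eq (X : Matrix (Fin n) (Fin n) ℝ) :
    X.map Complex.ofReal = Complex.ofRealHom.mapMatrix X := rfl

lemma cmap_mul (X Y : Matrix (Fin n) (Fin n) ℝ) :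
    (X * Y).map Complex.ofReal = X.map Complex.ofReal * Y.map Complex.ofReal := by
  rw [cmap_eq, cmap_eq, cmap_eq, _root_.map_mul]

lemma cmap_sub (X Y : Matrix (Fin n) (Fin n) ℝ) :
    (X - Y).map Complex.ofReal = X.map Complex.ofReal - Y.map Complex.ofReal := by
  rw [cmap_eq, cmap_eq, cmap_eq, _root_.map_sub]

lemma cmap_one : ((1 : Matrix (Fin n) (Fin n) ℝ)).map Complex.ofReal = 1 := by
  rw [cmap_eq, _root_.map_one]

lemma posDef_add {X Y : Matrix (Fin n) (Fin n) ℝ} (hX : X.PosDef) (hY : Y.PosDef) :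
    (X + Y).PosDef := by
  exact hX.add hY

lemma posDef_cmap {Y : Matrix (Fin n) (Fin n) ℝ} (hY : Y.PosDef)
    (v : Fin n → ℂ) (hv : v ≠ 0) : 0 < star v ⬝ᵥ ((Y.map Complex.ofReal) *ᵥ v) := by
  obtain ⟨B, hB⟩ : ∃ B : Matrix (Fin n) (Fin n) ℝ, Y = Bᴴ * B := by
    open MatrixOrder in
    simpa [Matrix.star_eq_conjTranspose] using
      CStarAlgebra.nonneg_iff_eq_star_mul_self.mp hY.posSemidef.nonneg
  have hdetB : B.det ≠ 0 := by
    intro h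
    have := hY.det_pos
    rw [hB, Matrix.det_mul, Matrix.det_conjTranspose, h] at this
    simp at this
  set Bc : Matrix (Fin n) (Fin n) ℂ := B.map Complex.ofReal with hBc
  have hfac : Y.map Complex.ofReal = Bcᴴ * Bc := by
    rw [hB, cmap_eq, _root_.map_mul]
    congr 1
    ext i j
    simp [Bc, Matrix.conjTranspose_apply]
  have hdetBc : Bc.det ≠ 0 := by
    have : Bc.det = Complex.ofReal B.det := by
      rw [hBc, cmap_eq, ← RingHom.map_det]; rfl
    rw [this]
    exact_mod_cast hdetB
  have hBv : Bc *ᵥ v ≠ 0 := by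
    intro h
    apply hv
    have hu : IsUnit Bc.det := isUnit_iff_ne_zero.mpr hdetBc
    have := congrArg (fun w => Bc⁻¹ *ᵥ w) h
    simpa [Matrix.mulVec_mulVec, Matrix.nonsing_inv_mul Bc hu] using this
  have : star v ⬝ᵥ ((Y.map Complex.ofReal) *ᵥ v) = star (Bc *ᵥ v) ⬝ᵥ (Bc *ᵥ v) := by
    rw [hfac, ← Matrix.mulVec_mulVec, Matrix.dotProduct_mulVec,
      Matrix.vecMul_conjTranspose, star_star]
  rw [this]
  exact Matrix.dotProduct_star_self_pos_iff.mpr hBv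

lemma hermitian_form_self_adjoint {A : Matrix (Fin n) (Fin n) ℂ} (hA : A.IsHermitian)
    (v : Fin n → ℂ) : star (star v ⬝ᵥ (A *ᵥ v)) = star v ⬝ᵥ (A *ᵥ v) := by
  conv_lhs => rw [show star v ⬝ᵥ (A *ᵥ v) = star v ⬝ᵥ star (star (A *ᵥ v)) by rw [star_star],
    Matrix.star_dotProduct_star]
  rw [star_star, Matrix.star_mulVec, hA.eq, ← Matrix.dotProduct_mulVec]

lemma isUnit_of_im_posDef {Ω : Matrix (Fin n) (Fin n) ℂ} (hsym : Ω.IsSymm)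
    (h : (Ω.map Complex.im).PosDef) : IsUnit Ω := by
  rw [Matrix.isUnit_iff_isUnit_det, isUnit_iff_ne_zero]
  intro hdet
  obtain ⟨v, hv, hΩv⟩ := Matrix.exists_mulVec_eq_zero_iff.mpr hdet
  have hdec : Ω = (Ω.map Complex.re).map Complex.ofReal
      + Complex.I • ((Ω.map Complex.im).map Complex.ofReal) := by
    ext i j
    simp only [Matrix.add_apply, Matrix.smul_apply, Matrix.map_apply, smul_eq_mul]
    rw [mul_comm]
    exact (Complex.re_add_im _).symm
  set tx := star v ⬝ᵥ (((Ω.map Complex.re).map Complex.ofReal) *ᵥ v) with htx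
  set ty := star v ⬝ᵥ (((Ω.map Complex.im).map Complex.ofReal) *ᵥ v) with hty
  have hty_pos : 0 < ty := posDef_cmap h v hv
  have h0 : tx + Complex.I * ty = 0 := by
    rw [htx, hty, ← smul_eq_mul, ← dotProduct_smul, ← Matrix.smul_mulVec,
      ← dotProduct_add, ← Matrix.add_mulVec, ← hdec, hΩv, dotProduct_zero]
  have hXsym : ((Ω.map Complex.re).map Complex.ofReal).IsHermitian := by
    ext i j
    have := congrFun (congrFun hsym j) i
    simp only [Matrix.transpose_apply] at this
    simp [Matrix.conjTranspose_apply, Matrix.map_apply, this]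
  have htx_real : star tx = tx := hermitian_form_self_adjoint hXsym v
  have h1 : ty.im = 0 ∧ 0 < ty.re := by
    rw [Complex.lt_def] at hty_pos
    exact ⟨hty_pos.2.symm, hty_pos.1⟩
  have h2 : tx.im = 0 := by
    have := congrArg Complex.im htx_real
    simp [Complex.conj_im] at this
    linarith [this]
  have := congrArg Complex.im h0
  simp [Complex.add_im, Complex.mul_im, h2, h1.1] at this
  linarith [h1.2]

variable {A B C D : Matrix (Fin n) (Fin n) ℂ}

lemma bracket (hAC : Aᵀ * C = Cᵀ * A) (hAD : Aᵀ * D - Cᵀ * B = 1)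
    (hBD : Bᵀ * D = Dᵀ * B) (hDA : Dᵀ * A - Bᵀ * C = 1)
    (Ω Ω' : Matrix (Fin n) (Fin n) ℂ) :
    (Ω * Aᵀ + Bᵀ) * (C * Ω' + D) - (Ω * Cᵀ + Dᵀ) * (A * Ω' + B) = Ω - Ω' := by
  have expand : (Ω * Aᵀ + Bᵀ) * (C * Ω' + D) - (Ω * Cᵀ + Dᵀ) * (A * Ω' + B)
      = Ω * ((Aᵀ * C - Cᵀ * A) * Ω') + Ω * (Aᵀ * D - Cᵀ * B)
        - (Dᵀ * A - Bᵀ * C) * Ω' - (Dᵀ * B - Bᵀ * D) := by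
    noncomm_ring
  rw [expand, hAC, hAD, hDA, hBD]
  simp

lemma Tsym (hAC : Aᵀ * C = Cᵀ * A) (hAD : Aᵀ * D - Cᵀ * B = 1)
    (hBD : Bᵀ * D = Dᵀ * B) (hDA : Dᵀ * A - Bᵀ * C = 1)
    {Ω : Matrix (Fin n) (Fin n) ℂ} (hΩ : Ω.IsSymm) :
    (C * Ω + D)ᵀ * (A * Ω + B) = (Ω * Aᵀ + Bᵀ) * (C * Ω + D) := by
  have hb := bracket hAC hAD hBD hDA Ω Ω
  rw [sub_self] at hb
  have hT : (C * Ω + D)ᵀ = Ω * Cᵀ + Dᵀ := by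
    rw [Matrix.transpose_add, Matrix.transpose_mul, hΩ.eq]
  rw [hT]
  exact (sub_eq_zero.mp hb).symm

lemma T_isUnit (hAC : Aᵀ * C = Cᵀ * A) (hAD : Aᵀ * D - Cᵀ * B = 1)
    (hBD : Bᵀ * D = Dᵀ * B) (hDA : Dᵀ * A - Bᵀ * C = 1)
    (hCr : C.map (starRingEnd ℂ) = C) (hDr : D.map (starRingEnd ℂ) = D)
    {Ω : Matrix (Fin n) (Fin n) ℂ} (hsym : Ω.IsSymm) (him : (Ω.map Complex.im).PosDef) :
    IsUnit (C * Ω + D) := by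
  rw [Matrix.isUnit_iff_isUnit_det, isUnit_iff_ne_zero]
  intro hdet
  obtain ⟨v, hv, hTv⟩ := Matrix.exists_mulVec_eq_zero_iff.mpr hdet
  set Ωb := Ω.map (starRingEnd ℂ) with hΩb
  have hconjT : (C * Ω + D)ᴴ = Ωb * Cᵀ + Dᵀ := by
    have h1 : (C * Ω + D)ᵀ = Ω * Cᵀ + Dᵀ := by
      rw [Matrix.transpose_add, Matrix.transpose_mul, hsym.eq]
    rw [Matrix.conjTranspose, h1]
    have : ((Ω * Cᵀ + Dᵀ).map (starRingEnd ℂ))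
        = Ωb * (C.map (starRingEnd ℂ))ᵀ + (D.map (starRingEnd ℂ))ᵀ := by
      ext i j
      simp [hΩb, Matrix.map_apply, Matrix.add_apply, Matrix.mul_apply, Matrix.transpose_apply,
        map_sum]
    rw [show ((Ω * Cᵀ + Dᵀ).map star) = ((Ω * Cᵀ + Dᵀ).map (starRingEnd ℂ)) from rfl, this,
      hCr, hDr]
  have hΩb_sym : Ωb.IsSymm := cj_isSymm hsym
  have hb := bracket hAC hAD hBD hDA Ωb Ω
  have e1 : star v ⬝ᵥ (((Ωb * Aᵀ + Bᵀ) * (C * Ω + D)) *ᵥ v) = 0 := by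
    rw [← Matrix.mulVec_mulVec, hTv, Matrix.mulVec_zero, dotProduct_zero]
  have e2 : star v ⬝ᵥ (((Ωb * Cᵀ + Dᵀ) * (A * Ω + B)) *ᵥ v) = 0 := by
    rw [← hconjT, ← Matrix.mulVec_mulVec, Matrix.dotProduct_mulVec, ← Matrix.star_mulVec,
      hTv, star_zero, zero_dotProduct]
  have happ : star v ⬝ᵥ ((Ωb - Ω) *ᵥ v) = 0 := by
    rw [← hb, Matrix.sub_mulVec, dotProduct_sub, e1, e2, sub_zero]
  have hdecomp : Ωb - Ω = (-(2 * Complex.I)) • ((Ω.map Complex.im).map Complex.ofReal) := by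
    ext i j
    simp only [Matrix.sub_apply, Matrix.smul_apply, Matrix.map_apply, hΩb, smul_eq_mul]
    simp [Complex.ext_iff]
    ring
  rw [hdecomp, Matrix.smul_mulVec, dotProduct_smul, smul_eq_mul] at happ
  have hty := (posDef_cmap him v hv).ne'
  have hc : (-(2 * Complex.I)) ≠ 0 := by simp [Complex.I_ne_zero]
  exact mul_ne_zero hc hty happ

lemma g_symm (hAC : Aᵀ * C = Cᵀ * A) (hAD : Aᵀ * D - Cᵀ * B = 1)
    (hBD : Bᵀ * D = Dᵀ * B) (hDA : Dᵀ * A - Bᵀ * C = 1)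
    {Ω : Matrix (Fin n) (Fin n) ℂ} (hΩ : Ω.IsSymm) (hT : IsUnit (C * Ω + D)) :
    ((A * Ω + B) * (C * Ω + D)⁻¹).IsSymm := by
  have hdet : IsUnit (C * Ω + D).det := (Matrix.isUnit_iff_isUnit_det _).mp hT
  unfold Matrix.IsSymm
  rw [Matrix.transpose_mul, Matrix.transpose_nonsing_inv]
  have h1 : (A * Ω + B)ᵀ = Ω * Aᵀ + Bᵀ := by
    rw [Matrix.transpose_add, Matrix.transpose_mul, hΩ.eq]
  rw [h1]
  have hdetT : IsUnit ((C * Ω + D)ᵀ).det := by rwa [Matrix.det_transpose]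
  calc ((C * Ω + D)ᵀ)⁻¹ * (Ω * Aᵀ + Bᵀ)
      = ((C * Ω + D)ᵀ)⁻¹ * ((Ω * Aᵀ + Bᵀ) * (C * Ω + D)) * (C * Ω + D)⁻¹ := by
        rw [Matrix.mul_assoc (((C * Ω + D)ᵀ)⁻¹), Matrix.mul_nonsing_inv_cancel_right _ _ hdet]
    _ = ((C * Ω + D)ᵀ)⁻¹ * ((C * Ω + D)ᵀ * (A * Ω + B)) * (C * Ω + D)⁻¹ := by
        rw [← Tsym hAC hAD hBD hDA hΩ]
    _ = (A * Ω + B) * (C * Ω + D)⁻¹ := by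
        rw [Matrix.nonsing_inv_mul_cancel_left _ _ hdetT]

lemma gdiff (hAC : Aᵀ * C = Cᵀ * A) (hAD : Aᵀ * D - Cᵀ * B = 1)
    (hBD : Bᵀ * D = Dᵀ * B) (hDA : Dᵀ * A - Bᵀ * C = 1)
    {Ω Ω' : Matrix (Fin n) (Fin n) ℂ} (hΩ : Ω.IsSymm) (hΩ' : Ω'.IsSymm)
    (hT : IsUnit (C * Ω + D)) (hT' : IsUnit (C * Ω' + D)) :
    (A * Ω + B) * (C * Ω + D)⁻¹ - (A * Ω' + B) * (C * Ω' + D)⁻¹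
      = ((C * Ω + D)ᵀ)⁻¹ * (Ω - Ω') * (C * Ω' + D)⁻¹ := by
  have hdet : IsUnit (C * Ω + D).det := (Matrix.isUnit_iff_isUnit_det _).mp hT
  have hdet' : IsUnit (C * Ω' + D).det := (Matrix.isUnit_iff_isUnit_det _).mp hT'
  have hdetT : IsUnit ((C * Ω + D)ᵀ).det := by rwa [Matrix.det_transpose]
  have hTt : (C * Ω + D)ᵀ = Ω * Cᵀ + Dᵀ := by
    rw [Matrix.transpose_add, Matrix.transpose_mul, hΩ.eq]
  have key : (C * Ω + D)ᵀ * ((A * Ω + B) * (C * Ω + D)⁻¹ - (A * Ω' + B) * (C * Ω' + D)⁻¹)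
      * (C * Ω' + D) = Ω - Ω' := by
    have t1 : (C * Ω + D)ᵀ * ((A * Ω + B) * (C * Ω + D)⁻¹) = Ω * Aᵀ + Bᵀ := by
      rw [← Matrix.mul_assoc, Tsym hAC hAD hBD hDA hΩ,
        Matrix.mul_nonsing_inv_cancel_right _ _ hdet]
    rw [Matrix.mul_sub, Matrix.sub_mul, t1, ← Matrix.mul_assoc ((C * Ω + D)ᵀ),
      Matrix.nonsing_inv_mul_cancel_right _ _ hdet', hTt]
    exact bracket hAC hAD hBD hDA Ω Ω'
  calc (A * Ω + B) * (C * Ω + D)⁻¹ - (A * Ω' + B) * (C * Ω' + D)⁻¹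
      = ((C * Ω + D)ᵀ)⁻¹ * ((C * Ω + D)ᵀ
          * ((A * Ω + B) * (C * Ω + D)⁻¹ - (A * Ω' + B) * (C * Ω' + D)⁻¹)
          * (C * Ω' + D)) * (C * Ω' + D)⁻¹ := by
        rw [Matrix.mul_assoc ((C * Ω + D)ᵀ), Matrix.nonsing_inv_mul_cancel_left _ _ hdetT,
          Matrix.mul_nonsing_inv_cancel_right _ _ hdet']
    _ = ((C * Ω + D)ᵀ)⁻¹ * (Ω - Ω') * (C * Ω' + D)⁻¹ := by rw [key]

lemma gdiff_swap (hAC : Aᵀ * C = Cᵀ * A) (hAD : Aᵀ * D - Cᵀ * B = 1)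
    (hBD : Bᵀ * D = Dᵀ * B) (hDA : Dᵀ * A - Bᵀ * C = 1)
    {Ω Ω' : Matrix (Fin n) (Fin n) ℂ} (hΩ : Ω.IsSymm) (hΩ' : Ω'.IsSymm)
    (hT : IsUnit (C * Ω + D)) (hT' : IsUnit (C * Ω' + D)) :
    (A * Ω + B) * (C * Ω + D)⁻¹ - (A * Ω' + B) * (C * Ω' + D)⁻¹
      = ((C * Ω' + D)ᵀ)⁻¹ * (Ω - Ω') * (C * Ω + D)⁻¹ := by
  have hd := gdiff hAC hAD hBD hDA hΩ hΩ' hT hT'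
  have hsymdiff : ((A * Ω + B) * (C * Ω + D)⁻¹ - (A * Ω' + B) * (C * Ω' + D)⁻¹).IsSymm := by
    unfold Matrix.IsSymm
    rw [Matrix.transpose_sub, (g_symm hAC hAD hBD hDA hΩ hT).eq,
      (g_symm hAC hAD hBD hDA hΩ' hT').eq]
  conv_lhs => rw [← hsymdiff.eq, hd]
  rw [Matrix.transpose_mul, Matrix.transpose_mul, Matrix.transpose_nonsing_inv,
    Matrix.transpose_nonsing_inv, Matrix.transpose_transpose, Matrix.transpose_sub,
    hΩ.eq, hΩ'.eq, Matrix.mul_assoc]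

lemma sympl_rel {M : Matrix (Fin n ⊕ Fin n) (Fin n ⊕ Fin n) ℝ} (hM : IsSymplectic M) :
    (M.toBlocks₁₁ᵀ * M.toBlocks₂₁ = M.toBlocks₂₁ᵀ * M.toBlocks₁₁)
    ∧ (M.toBlocks₁₁ᵀ * M.toBlocks₂₂ - M.toBlocks₂₁ᵀ * M.toBlocks₁₂ = 1)
    ∧ (M.toBlocks₁₂ᵀ * M.toBlocks₂₂ = M.toBlocks₂₂ᵀ * M.toBlocks₁₂)
    ∧ (M.toBlocks₂₂ᵀ * M.toBlocks₁₁ - M.toBlocks₁₂ᵀ * M.toBlocks₂₁ = 1) := by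
  have h := hM
  unfold IsSymplectic Jmat at h
  rw [← Matrix.fromBlocks_toBlocks M, Matrix.fromBlocks_transpose,
    Matrix.fromBlocks_multiply, Matrix.fromBlocks_multiply] at h
  have h11 := congrArg Matrix.toBlocks₁₁ h
  have h12 := congrArg Matrix.toBlocks₁₂ h
  have h21 := congrArg Matrix.toBlocks₂₁ h
  have h22 := congrArg Matrix.toBlocks₂₂ h
  simp only [Matrix.toBlocks_fromBlocks₁₁, Matrix.toBlocks_fromBlocks₁₂,
    Matrix.toBlocks_fromBlocks₂₁, Matrix.toBlocks_fromBlocks₂₂,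
    Matrix.mul_zero, Matrix.mul_one,
    Matrix.mul_neg, Matrix.neg_mul, mul_zero, mul_one, zero_add, add_zero,
    mul_neg, neg_mul] at h11 h12 h21 h22
  rw [neg_add_eq_zero] at h11 h22
  rw [neg_add_eq_sub] at h12 h21
  exact ⟨h11.symm, h12, h22.symm, by rw [← neg_sub, h21, neg_neg]⟩

end CRAux

theorem crossRatio_similar {n : ℕ}
    (M : Matrix (Fin n ⊕ Fin n) (Fin n ⊕ Fin n) ℝ) (hM : IsSymplectic M)
    (Ω₀ Ω₁ : Matrix (Fin n) (Fin n) ℂ) (hΩ₀ : InSiegelUHS Ω₀) (hΩ₁ : InSiegelUHS Ω₁) :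
    ∃ P : Matrix (Fin n) (Fin n) ℂ, IsUnit P ∧
      crossRatio (spSMul M Ω₁) (spSMul M Ω₀) = P * crossRatio Ω₁ Ω₀ * P⁻¹ := by
  classical
  open CRAux in
  obtain ⟨r1, r2, r3, r4⟩ := CRAux.sympl_rel hM
  set A := M.toBlocks₁₁.map Complex.ofReal with hA
  set B := M.toBlocks₁₂.map Complex.ofReal with hB
  set C := M.toBlocks₂₁.map Complex.ofReal with hC
  set D := M.toBlocks₂₂.map Complex.ofReal with hD
  have hAC : Aᵀ * C = Cᵀ * A := by
    rw [hA, hC, ← Matrix.transpose_map, ← Matrix.transpose_map, ← CRAux.cmap_mul,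
      ← CRAux.cmap_mul, r1]
  have hAD : Aᵀ * D - Cᵀ * B = 1 := by
    rw [hA, hB, hC, hD, ← Matrix.transpose_map, ← Matrix.transpose_map, ← CRAux.cmap_mul,
      ← CRAux.cmap_mul, ← CRAux.cmap_sub, r2, CRAux.cmap_one]
  have hBD : Bᵀ * D = Dᵀ * B := by
    rw [hB, hD, ← Matrix.transpose_map, ← Matrix.transpose_map, ← CRAux.cmap_mul,
      ← CRAux.cmap_mul, r3]
  have hDA : Dᵀ * A - Bᵀ * C = 1 := by
    rw [hA, hB, hC, hD, ← Matrix.transpose_map, ← Matrix.transpose_map, ← CRAux.cmap_mul,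
      ← CRAux.cmap_mul, ← CRAux.cmap_sub, r4, CRAux.cmap_one]
  have hAr : CRAux.cj A = A := CRAux.cj_cmap _
  have hBr : CRAux.cj B = B := CRAux.cj_cmap _
  have hCr : CRAux.cj C = C := CRAux.cj_cmap _
  have hDr : CRAux.cj D = D := CRAux.cj_cmap _
  have hs₀ : Ω₀.IsSymm := hΩ₀.1
  have hs₁ : Ω₁.IsSymm := hΩ₁.1
  have hs₀b : (CRAux.cj Ω₀).IsSymm := CRAux.cj_isSymm hs₀
  have hs₁b : (CRAux.cj Ω₁).IsSymm := CRAux.cj_isSymm hs₁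
  -- units of the denominators
  have hT₀ : IsUnit (C * Ω₀ + D) := CRAux.T_isUnit hAC hAD hBD hDA hCr hDr hs₀ hΩ₀.2
  have hT₁ : IsUnit (C * Ω₁ + D) := CRAux.T_isUnit hAC hAD hBD hDA hCr hDr hs₁ hΩ₁.2
  have hcjT : ∀ Ω : Matrix (Fin n) (Fin n) ℂ,
      C * CRAux.cj Ω + D = CRAux.cj (C * Ω + D) := by
    intro Ω
    rw [CRAux.cj_add, CRAux.cj_mul, hCr, hDr]
  have hT₀b : IsUnit (C * CRAux.cj Ω₀ + D) := by
    rw [hcjT]; exact CRAux.cj_isUnit hT₀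
  have hT₁b : IsUnit (C * CRAux.cj Ω₁ + D) := by
    rw [hcjT]; exact CRAux.cj_isUnit hT₁
  -- units of the middle factors
  have hU : IsUnit (Ω₁ - CRAux.cj Ω₀) := by
    apply CRAux.isUnit_of_im_posDef
    · unfold Matrix.IsSymm
      rw [Matrix.transpose_sub, hs₁.eq, hs₀b.eq]
    · have him : (Ω₁ - CRAux.cj Ω₀).map Complex.im
          = Ω₁.map Complex.im + Ω₀.map Complex.im := by
        ext i j
        simp [Matrix.map_apply, Matrix.sub_apply, Matrix.add_apply]
      rw [him]
      exact CRAux.posDef_add hΩ₁.2 hΩ₀.2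
  have hV : IsUnit (CRAux.cj Ω₁ - Ω₀) := by
    have : CRAux.cj Ω₁ - Ω₀ = CRAux.cj (Ω₁ - CRAux.cj Ω₀) := by
      rw [CRAux.cj_sub, CRAux.cj_cj]
    rw [this]
    exact CRAux.cj_isUnit hU
  -- conjugation commutes with the action
  have hcjg : ∀ Ω : Matrix (Fin n) (Fin n) ℂ,
      CRAux.cj ((A * Ω + B) * (C * Ω + D)⁻¹)
        = (A * CRAux.cj Ω + B) * (C * CRAux.cj Ω + D)⁻¹ := by
    intro Ω
    rw [CRAux.cj_mul, CRAux.cj_inv, CRAux.cj_add, CRAux.cj_mul, hAr, hBr, ← hcjT]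
  -- the four difference identities (swapped form)
  have E1 := CRAux.gdiff_swap hAC hAD hBD hDA hs₁ hs₀ hT₁ hT₀
  have E2 := CRAux.gdiff_swap hAC hAD hBD hDA hs₁ hs₀b hT₁ hT₀b
  have E3 := CRAux.gdiff_swap hAC hAD hBD hDA hs₁b hs₀b hT₁b hT₀b
  have E4 := CRAux.gdiff_swap hAC hAD hBD hDA hs₁b hs₀ hT₁b hT₀
  -- determinant units
  have dT₀ : IsUnit (C * Ω₀ + D).det := (Matrix.isUnit_iff_isUnit_det _).mp hT₀
  have dT₁ : IsUnit (C * Ω₁ + D).det := (Matrix.isUnit_iff_isUnit_det _).mp hT₁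
  have dT₀b : IsUnit (C * CRAux.cj Ω₀ + D).det := (Matrix.isUnit_iff_isUnit_det _).mp hT₀b
  have dT₁b : IsUnit (C * CRAux.cj Ω₁ + D).det := (Matrix.isUnit_iff_isUnit_det _).mp hT₁b
  have dT₀t : IsUnit ((C * Ω₀ + D)ᵀ).det := by rwa [Matrix.det_transpose]
  have dT₀bt : IsUnit ((C * CRAux.cj Ω₀ + D)ᵀ).det := by rwa [Matrix.det_transpose]
  refine ⟨((C * Ω₀ + D)ᵀ)⁻¹, ?_, ?_⟩
  · rw [Matrix.isUnit_nonsing_inv_iff, Matrix.isUnit_iff_isUnit_det]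
    exact dT₀t
  · have hsp : ∀ Ω : Matrix (Fin n) (Fin n) ℂ,
        spSMul M Ω = (A * Ω + B) * (C * Ω + D)⁻¹ := fun _ => rfl
    rw [Matrix.nonsing_inv_nonsing_inv _ dT₀t]
    unfold crossRatio
    rw [hsp, hsp]
    simp only [CRAux.cj] at hcjg E1 E2 E3 E4 dT₀ dT₁ dT₀b dT₁b dT₀t dT₀bt
    rw [hcjg Ω₁, hcjg Ω₀, E1, E2, E3, E4]
    rw [Matrix.mul_inv_rev, Matrix.mul_inv_rev, Matrix.mul_inv_rev, Matrix.mul_inv_rev,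
      Matrix.nonsing_inv_nonsing_inv _ dT₁, Matrix.nonsing_inv_nonsing_inv _ dT₀bt,
      Matrix.nonsing_inv_nonsing_inv _ dT₁b, Matrix.nonsing_inv_nonsing_inv _ dT₀t]
    have dT₁' : IsUnit (C * Ω₁ + D)⁻¹.det := Matrix.isUnit_nonsing_inv_det _ dT₁
    have dT₁b' : IsUnit (C * CRAux.cj Ω₁ + D)⁻¹.det := Matrix.isUnit_nonsing_inv_det _ dT₁b
    simp only [Matrix.mul_assoc]
    rw [Matrix.nonsing_inv_mul_cancel_left _ _ dT₁,
      Matrix.mul_nonsing_inv_cancel_left _ _ dT₀bt,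
      Matrix.nonsing_inv_mul_cancel_left _ _ dT₁b]
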